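/- Let $R>0$, $x_0 \in \mathbb{R}^n$ with $|x_0| < R$, and $\beta > 0$. Set $\alpha^2 = R^2 - |x_0|^2$ and define $\varphi(x) = (|x-x_0|^2 + \alpha^2)^{-\beta R}$. Then for every $x$ on the sphere $|x| = R$, the Robin boundary condition holds: $\nabla \varphi(x) \cdot (x/R) + \beta \varphi(x) = 0$. -/

import Mathlib

open Real

theorem stmt_0 {n : ℕ} (R β : ℝ) (hR : 0 < R) (hβ : 0 < β)
    (x₀ : EuclideanSpace ℝ (Fin n)) (hx₀ : ‖x₀‖ < R)
    (φ : EuclideanSpace ℝ (Fin n) → ℝ)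
    (hφ : ∀ x, φ x = (‖x - x₀‖ ^ 2 + (R ^ 2 - ‖x₀‖ ^ 2)) ^ (-(β * R))) :
    ∀ x : EuclideanSpace ℝ (Fin n), ‖x‖ = R →
      (inner ℝ (gradient φ x) (R⁻¹ • x) : ℝ) + β * φ x = 0 := by
  intro x hx
  set c : ℝ := R ^ 2 - ‖x₀‖ ^ 2 with hc
  set p : ℝ := -(β * R) with hp
  set u : EuclideanSpace ℝ (Fin n) → ℝ := fun y => ‖y - x₀‖ ^ 2 + c with hu
  have hupos : ∀ y, 0 < u y := by
    intro y
    have : 0 < c := by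
      have := hx₀
      nlinarith [norm_nonneg x₀, sq_nonneg (‖y - x₀‖)]
    positivity
  -- derivative of y ↦ y - x₀
  have h1 : HasFDerivAt (fun y : EuclideanSpace ℝ (Fin n) => y - x₀) (ContinuousLinearMap.id ℝ (EuclideanSpace ℝ (Fin n))) x :=
    (hasFDerivAt_id x).sub_const x₀
  -- derivative of u
  have hD : HasFDerivAt u
      ((fderivInnerCLM ℝ (x - x₀, x - x₀)).comp
        ((ContinuousLinearMap.id ℝ (EuclideanSpace ℝ (Fin n))).prod (ContinuousLinearMap.id ℝ (EuclideanSpace ℝ (Fin n))))) x := by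
    have h2 : HasFDerivAt (fun y : EuclideanSpace ℝ (Fin n) => (inner ℝ (y - x₀) (y - x₀) : ℝ))
        ((fderivInnerCLM ℝ (x - x₀, x - x₀)).comp
          ((ContinuousLinearMap.id ℝ (EuclideanSpace ℝ (Fin n))).prod (ContinuousLinearMap.id ℝ (EuclideanSpace ℝ (Fin n))))) x :=
      h1.inner ℝ h1
    have h3 := h2.add_const c
    have h4 : u = fun y => (inner ℝ (y - x₀) (y - x₀) : ℝ) + c := by
      funext y
      simp only [hu, real_inner_self_eq_norm_sq]
    rw [h4]; exact h3
  -- derivative of φ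
  set L : EuclideanSpace ℝ (Fin n) →L[ℝ] ℝ := (p * u x ^ (p - 1)) •
      ((fderivInnerCLM ℝ (x - x₀, x - x₀)).comp
        ((ContinuousLinearMap.id ℝ (EuclideanSpace ℝ (Fin n))).prod (ContinuousLinearMap.id ℝ (EuclideanSpace ℝ (Fin n))))) with hL
  have hφ' : HasFDerivAt φ L x := by
    have := hD.rpow_const (p := p) (Or.inl (hupos x).ne')
    have h5 : φ = fun y => u y ^ p := by
      funext y
      rw [hφ y]
    rw [h5]; exact this
  have hgrad : HasGradientAt φ ((InnerProductSpace.toDual ℝ (EuclideanSpace ℝ (Fin n))).symm L) x :=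
    hφ'.hasGradientAt
  rw [hgrad.gradient, InnerProductSpace.toDual_symm_apply]
  have hLval : L (R⁻¹ • x) = (p * u x ^ (p - 1)) * (R⁻¹ * (2 * inner ℝ (x - x₀) x)) := by
    rw [hL]
    simp [real_inner_smul_right, real_inner_comm (x - x₀) x]
    ring
  have hkey : u x = 2 * (inner ℝ (x - x₀) x : ℝ) := by
    rw [hu, hc]
    simp only [← real_inner_self_eq_norm_sq, inner_sub_left, inner_sub_right]
    have hxx : (inner ℝ x x : ℝ) = R ^ 2 := by
      rw [real_inner_self_eq_norm_sq, hx]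
    rw [hxx, real_inner_comm x₀ x]
    ring
  rw [hLval, hφ x]
  have huφ : (‖x - x₀‖ ^ 2 + (R ^ 2 - ‖x₀‖ ^ 2)) ^ (-(β * R)) = u x ^ p := rfl
  rw [huφ, ← hkey]
  have : u x ^ (p - 1) * u x = u x ^ p := by
    rw [← Real.rpow_add_one (hupos x).ne']
    ring_nf
  have hR' : R⁻¹ * R = 1 := inv_mul_cancel₀ hR.ne'
  calc p * u x ^ (p - 1) * (R⁻¹ * u x) + β * u x ^ p
      = -(β * (R⁻¹ * R)) * (u x ^ (p - 1) * u x) + β * u x ^ p := by rw [hp]; ring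
    _ = 0 := by rw [hR', this]; ring
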